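/- arXiv:2002.12081 — 2 statements merged into one kernel-verified Lean document; each statement's English description precedes it below -/
import Mathlib

section
/- Assume there is an invertible X ∈ ℝ^{s×s} with ‖X^{−1}B_nX‖_∞ ≤ 1 for all n = 1,…,N. Then for every block vector W ∈ ℝ^{(N+1)s}, ‖M^{−1}W‖_X ≤ ‖W_0‖_X + ‖W_N‖_X + (N−1)·max_{1≤n≤N−1} ‖W_n‖_X (for N = 1 the last term is absent). In particular, the boundary blocks W_0 and W_N enter the bound with constant 2 while the interior blocks enter with the factor N. -/
open Matrix

/-- The block lower bidiagonal matrix `M` with blocks `M_{nn} = I_s`,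
`M_{n,n-1} = -B_n` (for `1 ≤ n ≤ N`) and `M_{nk} = 0` otherwise. -/
noncomputable def bigM (s N : ℕ) (B : ℕ → Matrix (Fin s) (Fin s) ℝ) :
    Matrix (Fin (N + 1) × Fin s) (Fin (N + 1) × Fin s) ℝ :=
  Matrix.of fun p q =>
    if (p.1 : ℕ) = (q.1 : ℕ) then (if p.2 = q.2 then 1 else 0)
    else if (p.1 : ℕ) = (q.1 : ℕ) + 1 then -(B (p.1 : ℕ) p.2 q.2) else 0

/-- The maximum norm `‖v‖_∞ = max_i |v_i|` of a vector. -/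
noncomputable def vnormInf {s : ℕ} (v : Fin s → ℝ) : ℝ := ⨆ i, |v i|

/-- The maximum row sum norm `‖A‖_∞ = max_i ∑_j |a_{ij}|` of a matrix. -/
noncomputable def mnormInf {s : ℕ} (A : Matrix (Fin s) (Fin s) ℝ) : ℝ :=
  ⨆ i, ∑ j, |A i j|

open Finset

/-- Recursive solution of the bidiagonal system. -/
noncomputable def solV {s : ℕ} (B : ℕ → Matrix (Fin s) (Fin s) ℝ)
    (w : ℕ → Fin s → ℝ) : ℕ → Fin s → ℝ
  | 0 => w 0
  | n + 1 => B (n + 1) *ᵥ solV B w n + w (n + 1)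

/-- Extension of a block vector to a ℕ-indexed family. -/
noncomputable def wExt {s : ℕ} (N : ℕ) (u : Fin (N + 1) × Fin s → ℝ) : ℕ → Fin s → ℝ :=
  fun n => if h : n < N + 1 then (fun i => u (⟨n, h⟩, i)) else 0

lemma bigM_mulVec_solV (s N : ℕ) (B : ℕ → Matrix (Fin s) (Fin s) ℝ)
    (u : Fin (N + 1) × Fin s → ℝ) :
    bigM s N B *ᵥ (fun p => solV B (wExt N u) p.1 p.2) = u := by
  funext p
  obtain ⟨n, i⟩ := p
  show ∑ q : Fin (N + 1) × Fin s, bigM s N B (n, i) q * solV B (wExt N u) q.1 q.2 = u (n, i)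
  rw [Fintype.sum_prod_type]
  obtain ⟨nv, hn⟩ := n
  match nv with
  | 0 =>
    rw [Finset.sum_eq_single (⟨0, hn⟩ : Fin (N + 1))]
    · have : ∀ j, bigM s N B (⟨0, hn⟩, i) (⟨0, hn⟩, j) = if i = j then 1 else 0 := by
        intro j; simp [bigM]
      simp only [this, ite_mul, one_mul, zero_mul, Finset.sum_ite_eq]
      simp [solV, wExt]
    · intro m _ hm
      have hmv : (m : ℕ) ≠ 0 := fun h => hm (Fin.ext h)
      apply Finset.sum_eq_zero
      intro j _
      have : bigM s N B (⟨0, hn⟩, i) (m, j) = 0 := by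
        simp only [bigM, Matrix.of_apply]
        rw [if_neg (by omega), if_neg (by omega)]
      rw [this, zero_mul]
    · intro h; exact absurd (Finset.mem_univ _) h
  | a + 1 =>
    have ha : a < N + 1 := by omega
    rw [Finset.sum_eq_add_of_mem (⟨a + 1, hn⟩ : Fin (N + 1)) (⟨a, ha⟩ : Fin (N + 1))
        (Finset.mem_univ _) (Finset.mem_univ _) (by simp [Fin.ext_iff])]
    · have h1 : ∀ j, bigM s N B (⟨a + 1, hn⟩, i) (⟨a + 1, hn⟩, j) = if i = j then 1 else 0 := by
        intro j; simp [bigM]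
      have h2 : ∀ j, bigM s N B (⟨a + 1, hn⟩, i) (⟨a, ha⟩, j) = -(B (a + 1) i j) := by
        intro j
        simp only [bigM, Matrix.of_apply]
        rw [if_neg (by omega)]
        simp
      simp only [h1, h2, ite_mul, one_mul, zero_mul, Finset.sum_ite_eq]
      simp only [Finset.mem_univ, if_true, neg_mul, Finset.sum_neg_distrib]
      have hv : solV B (wExt N u) (a + 1) i = (B (a + 1) *ᵥ solV B (wExt N u) a) i
          + wExt N u (a + 1) i := rfl
      have hw : wExt N u (a + 1) i = u (⟨a + 1, hn⟩, i) := by simp [wExt, hn]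
      rw [hv, hw, Matrix.mulVec, dotProduct]
      ring
    · intro c _ hc
      have hc1 : (c : ℕ) ≠ a + 1 := fun h => hc.1 (Fin.ext h)
      have hc2 : (c : ℕ) ≠ a := fun h => hc.2 (Fin.ext h)
      apply Finset.sum_eq_zero
      intro j _
      have : bigM s N B (⟨a + 1, hn⟩, i) (c, j) = 0 := by
        simp only [bigM, Matrix.of_apply]
        rw [if_neg (by omega), if_neg (by omega)]
      rw [this, zero_mul]

lemma isUnit_bigM (s N : ℕ) (B : ℕ → Matrix (Fin s) (Fin s) ℝ) : IsUnit (bigM s N B) :=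
  Matrix.mulVec_surjective_iff_isUnit.mp fun u => ⟨_, bigM_mulVec_solV s N B u⟩

lemma inv_bigM_mulVec (s N : ℕ) (B : ℕ → Matrix (Fin s) (Fin s) ℝ)
    (u : Fin (N + 1) × Fin s → ℝ) :
    (bigM s N B)⁻¹ *ᵥ u = fun p => solV B (wExt N u) p.1 p.2 := by
  conv_lhs => rw [← bigM_mulVec_solV s N B u]
  rw [Matrix.mulVec_mulVec, Matrix.nonsing_inv_mul _
    ((Matrix.isUnit_iff_isUnit_det _).mp (isUnit_bigM s N B)), Matrix.one_mulVec]

lemma abs_le_vnormInf {s : ℕ} (v : Fin s → ℝ) (i : Fin s) : |v i| ≤ vnormInf v :=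
  le_ciSup (f := fun i => |v i|) (Set.Finite.bddAbove (Set.finite_range _)) i

lemma vnormInf_le {s : ℕ} [NeZero s] {v : Fin s → ℝ} {c : ℝ} (h : ∀ i, |v i| ≤ c) :
    vnormInf v ≤ c := ciSup_le h

lemma vnormInf_nonneg {s : ℕ} [NeZero s] (v : Fin s → ℝ) : 0 ≤ vnormInf v :=
  le_trans (abs_nonneg _) (abs_le_vnormInf v ⟨0, Nat.pos_of_ne_zero (NeZero.ne s)⟩)

lemma rowsum_le_mnormInf {s : ℕ} (A : Matrix (Fin s) (Fin s) ℝ) (i : Fin s) :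
    ∑ j, |A i j| ≤ mnormInf A :=
  le_ciSup (f := fun i => ∑ j, |A i j|) (Set.Finite.bddAbove (Set.finite_range _)) i

lemma vnormInf_mulVec {s : ℕ} [NeZero s] (A : Matrix (Fin s) (Fin s) ℝ) (v : Fin s → ℝ) :
    vnormInf (A *ᵥ v) ≤ mnormInf A * vnormInf v := by
  apply vnormInf_le
  intro i
  calc |(A *ᵥ v) i| = |∑ j, A i j * v j| := rfl
    _ ≤ ∑ j, |A i j * v j| := Finset.abs_sum_le_sum_abs _ _
    _ = ∑ j, |A i j| * |v j| := by simp [abs_mul]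
    _ ≤ ∑ j, |A i j| * vnormInf v :=
        Finset.sum_le_sum fun j _ =>
          mul_le_mul_of_nonneg_left (abs_le_vnormInf v j) (abs_nonneg _)
    _ = (∑ j, |A i j|) * vnormInf v := by rw [Finset.sum_mul]
    _ ≤ mnormInf A * vnormInf v :=
        mul_le_mul_of_nonneg_right (rowsum_le_mnormInf A i) (vnormInf_nonneg v)

lemma vnormInf_add {s : ℕ} [NeZero s] (u v : Fin s → ℝ) :
    vnormInf (u + v) ≤ vnormInf u + vnormInf v :=
  vnormInf_le fun i => (abs_add_le _ _).trans
    (add_le_add (abs_le_vnormInf u i) (abs_le_vnormInf v i))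

/-- if there is an invertible `X` with `‖X⁻¹ B_n X‖_∞ ≤ 1` for
`n = 1,…,N`, then for every block vector `W`,
`‖M⁻¹W‖_X ≤ ‖W_0‖_X + ‖W_N‖_X + (N-1) · max_{1≤n≤N-1} ‖W_n‖_X`
(for `N = 1` the last term is absent): the boundary blocks enter with
constant 2 while the interior blocks enter with the factor `N`. -/
theorem stmt4 (s N : ℕ) (hs : 1 ≤ s) (hN : 1 ≤ N)
    (B : ℕ → Matrix (Fin s) (Fin s) ℝ)
    (X : Matrix (Fin s) (Fin s) ℝ) (hX : IsUnit X)
    (hB : ∀ n : ℕ, 1 ≤ n → n ≤ N → mnormInf (X⁻¹ * B n * X) ≤ 1)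
    (W : Fin (N + 1) → Fin s → ℝ) :
    (⨆ n : Fin (N + 1),
        vnormInf (X⁻¹ *ᵥ fun i => ((bigM s N B)⁻¹ *ᵥ fun p => W p.1 p.2) (n, i)))
      ≤ vnormInf (X⁻¹ *ᵥ W 0) + vnormInf (X⁻¹ *ᵥ W (Fin.last N)) +
          ((N : ℝ) - 1) *
            ⨆ n : Fin (N + 1),
              (if 1 ≤ (n : ℕ) ∧ (n : ℕ) ≤ N - 1 then vnormInf (X⁻¹ *ᵥ W n) else 0) := by
  haveI : NeZero s := ⟨by omega⟩
  set u : Fin (N + 1) × Fin s → ℝ := fun p => W p.1 p.2 with hu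
  set w : ℕ → Fin s → ℝ := wExt N u with hwdef
  have hsol : (bigM s N B)⁻¹ *ᵥ u = fun p => solV B w p.1 p.2 := inv_bigM_mulVec s N B u
  set c : ℕ → ℝ := fun k => vnormInf (X⁻¹ *ᵥ w k) with hc
  have hXX : X * X⁻¹ = 1 :=
    Matrix.mul_nonsing_inv _ ((Matrix.isUnit_iff_isUnit_det _).mp hX)
  have hcnn : ∀ k, 0 ≤ c k := fun k => vnormInf_nonneg _
  have key : ∀ n, n ≤ N →
      vnormInf (X⁻¹ *ᵥ solV B w n) ≤ ∑ k ∈ Finset.range (n + 1), c k := by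
    intro n
    induction n with
    | zero => intro _; simp [solV, hc]
    | succ n ih =>
      intro hn1
      have hrec : solV B w (n + 1) = B (n + 1) *ᵥ solV B w n + w (n + 1) := rfl
      rw [hrec, Matrix.mulVec_add, Finset.sum_range_succ]
      refine le_trans (vnormInf_add _ _) (add_le_add ?_ (le_refl (c (n + 1))))
      have hconj : X⁻¹ *ᵥ (B (n + 1) *ᵥ solV B w n)
          = (X⁻¹ * B (n + 1) * X) *ᵥ (X⁻¹ *ᵥ solV B w n) := by
        rw [Matrix.mulVec_mulVec, Matrix.mulVec_mulVec,
          Matrix.mul_assoc (X⁻¹ * B (n + 1)) X X⁻¹, hXX, Matrix.mul_one]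
      calc vnormInf (X⁻¹ *ᵥ (B (n + 1) *ᵥ solV B w n))
          = vnormInf ((X⁻¹ * B (n + 1) * X) *ᵥ (X⁻¹ *ᵥ solV B w n)) := by rw [hconj]
        _ ≤ mnormInf (X⁻¹ * B (n + 1) * X) * vnormInf (X⁻¹ *ᵥ solV B w n) :=
            vnormInf_mulVec _ _
        _ ≤ 1 * vnormInf (X⁻¹ *ᵥ solV B w n) :=
            mul_le_mul_of_nonneg_right (hB (n + 1) (by omega) (by omega))
              (vnormInf_nonneg _)
        _ ≤ ∑ k ∈ Finset.range (n + 1), c k := by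
            rw [one_mul]; exact ih (by omega)
  have hck : ∀ k, ∀ h : k < N + 1, c k = vnormInf (X⁻¹ *ᵥ W ⟨k, h⟩) := by
    intro k h
    simp only [hc, hwdef, wExt, dif_pos h, hu]
  set S := ⨆ n : Fin (N + 1),
      (if 1 ≤ (n : ℕ) ∧ (n : ℕ) ≤ N - 1 then vnormInf (X⁻¹ *ᵥ W n) else 0) with hS
  have hsum : ∑ k ∈ Finset.range (N + 1), c k
      ≤ vnormInf (X⁻¹ *ᵥ W 0) + vnormInf (X⁻¹ *ᵥ W (Fin.last N)) + ((N : ℝ) - 1) * S := by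
    rw [Finset.sum_range_succ, Finset.range_eq_Ico,
      Finset.sum_eq_sum_Ico_succ_bot (by omega : 0 < N)]
    have h0 : c 0 = vnormInf (X⁻¹ *ᵥ W 0) := by
      rw [hck 0 (by omega)]
      congr 1
    have hNN : c N = vnormInf (X⁻¹ *ᵥ W (Fin.last N)) := by
      rw [hck N (by omega)]
      rfl
    have hI : ∑ k ∈ Finset.Ico 1 N, c k ≤ ((N : ℝ) - 1) * S := by
      have hle : ∀ k ∈ Finset.Ico 1 N, c k ≤ S := by
        intro k hk
        rw [Finset.mem_Ico] at hk
        have hk1 : k < N + 1 := by omega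
        rw [hck k hk1]
        have := le_ciSup (f := fun n : Fin (N + 1) =>
            if 1 ≤ (n : ℕ) ∧ (n : ℕ) ≤ N - 1 then vnormInf (X⁻¹ *ᵥ W n) else 0)
          (Set.Finite.bddAbove (Set.finite_range _)) (⟨k, hk1⟩ : Fin (N + 1))
        simpa [show 1 ≤ k ∧ k ≤ N - 1 from ⟨hk.1, by omega⟩] using this
      calc ∑ k ∈ Finset.Ico 1 N, c k ≤ (Finset.Ico 1 N).card • S :=
            Finset.sum_le_card_nsmul _ _ _ hle
        _ = ((N - 1 : ℕ) : ℝ) * S := by rw [Nat.card_Ico, nsmul_eq_mul]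
        _ = ((N : ℝ) - 1) * S := by rw [Nat.cast_sub hN, Nat.cast_one]
    linarith
  simp only [hsol]
  apply ciSup_le
  intro n
  calc vnormInf (X⁻¹ *ᵥ fun i => solV B w (↑n) i)
      ≤ ∑ k ∈ Finset.range ((n : ℕ) + 1), c k := key n (Nat.lt_succ_iff.mp n.isLt)
    _ ≤ ∑ k ∈ Finset.range (N + 1), c k :=
        Finset.sum_le_sum_of_subset_of_nonneg
          (Finset.range_subset_range.mpr (by omega)) (fun k _ _ => hcnn k)
    _ ≤ _ := hsum
end

section
/- Let the nodes c_1,…,c_s be pairwise distinct and symmetric with parameter ζ ∈ ℝ, i.e. Πc = ζ·1 − c. Then the extrapolation matrix Θ = V_s𝒫_sV_s^{−1} satisfies Π Θ Π = Θ^{−1}. -/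
open Matrix

/-- The Vandermonde matrix `V_q(c) ∈ ℝ^{s×q}` with entries `c_i^{j-1}`. -/
noncomputable def vand {s : ℕ} (c : Fin s → ℝ) (q : ℕ) : Matrix (Fin s) (Fin q) ℝ :=
  Matrix.of fun i j => c i ^ (j : ℕ)

/-- The upper triangular Pascal matrix `𝒫_q` with entries `C(j-1, i-1)`. -/
noncomputable def pascal (q : ℕ) : Matrix (Fin q) (Fin q) ℝ :=
  Matrix.of fun i j => ((j : ℕ).choose (i : ℕ) : ℝ)

/-- The flip permutation matrix `Π ∈ ℝ^{s×s}`, with `Π_{ij} = 1` iff `j = s+1-i`. -/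
noncomputable def flipPerm (s : ℕ) : Matrix (Fin s) (Fin s) ℝ :=
  Matrix.of fun i j => if (i : ℕ) + (j : ℕ) = s - 1 then 1 else 0

/-- Matrix of the affine substitution `x ↦ a x + b` on coefficients. -/
noncomputable def binM (q : ℕ) (a b : ℝ) : Matrix (Fin q) (Fin q) ℝ :=
  Matrix.of fun i j => ((j : ℕ).choose (i : ℕ) : ℝ) * a ^ (i : ℕ) * b ^ ((j : ℕ) - (i : ℕ))

lemma vand_mul_binM {s : ℕ} (q : ℕ) (e : Fin s → ℝ) (a b : ℝ) :
    vand e q * binM q a b = vand (fun i => a * e i + b) q := by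
  ext i j
  simp only [Matrix.mul_apply, vand, binM, Matrix.of_apply]
  rw [Fin.sum_univ_eq_sum_range
    (fun k => e i ^ k * (((j : ℕ).choose k : ℝ) * a ^ k * b ^ ((j : ℕ) - k)))]
  rw [add_pow]
  rw [← Finset.sum_subset (Finset.range_subset_range.mpr (Nat.succ_le_of_lt j.isLt))]
  · exact Finset.sum_congr rfl fun k _ => by rw [mul_pow]; ring
  · intro k hk hk'
    have : (j : ℕ) < k := by
      simp only [Finset.mem_range] at hk hk'; omega
    rw [Nat.choose_eq_zero_of_lt this]
    simp

lemma flip_sum {s : ℕ} (i : Fin s) (x : Fin s → ℝ) :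
    (∑ k : Fin s, (if (i : ℕ) + (k : ℕ) = s - 1 then (1 : ℝ) else 0) * x k)
      = x ⟨s - 1 - (i : ℕ), by have := i.isLt; omega⟩ := by
  have hi := i.isLt
  rw [Fintype.sum_eq_single (⟨s - 1 - (i : ℕ), by omega⟩ : Fin s)]
  · rw [if_pos (by simp; omega), one_mul]
  · intro k hk
    rw [if_neg, zero_mul]
    intro h
    exact hk (Fin.ext (by simp; omega))

lemma cancel_left {n : ℕ} {A B C : Matrix (Fin n) (Fin n) ℝ} (hA : IsUnit A.det)
    (h : A * B = A * C) : B = C := by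
  calc B = A⁻¹ * (A * B) := by
        rw [← Matrix.mul_assoc, Matrix.nonsing_inv_mul _ hA, Matrix.one_mul]
    _ = A⁻¹ * (A * C) := by rw [h]
    _ = C := by rw [← Matrix.mul_assoc, Matrix.nonsing_inv_mul _ hA, Matrix.one_mul]

/-- for pairwise distinct nodes that are symmetric with parameter `ζ`
(`Πc = ζ·1 - c`), the extrapolation matrix `Θ = V_s 𝒫_s V_s⁻¹` satisfies
`Π Θ Π = Θ⁻¹`. -/
theorem stmt10 (s : ℕ) (c : Fin s → ℝ) (hc : Function.Injective c) (ζ : ℝ)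
    (hsym : flipPerm s *ᵥ c = fun i => ζ - c i) :
    flipPerm s * (vand c s * pascal s * (vand c s)⁻¹) * flipPerm s
      = (vand c s * pascal s * (vand c s)⁻¹)⁻¹ := by
  set d : Fin s → ℝ := fun i => ζ - c i with hd
  set V : Matrix (Fin s) (Fin s) ℝ := vand c s with hV
  set Vd : Matrix (Fin s) (Fin s) ℝ := vand d s with hVd
  set P : Matrix (Fin s) (Fin s) ℝ := pascal s with hP
  set Pi : Matrix (Fin s) (Fin s) ℝ := flipPerm s with hPi
  set E : Matrix (Fin s) (Fin s) ℝ := binM s (-1) ζ with hE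
  set Q : Matrix (Fin s) (Fin s) ℝ := binM s 1 (-1) with hQ
  -- reflection property of nodes
  have hrefl : ∀ i : Fin s, c ⟨s - 1 - (i : ℕ), by have := i.isLt; omega⟩ = ζ - c i := by
    intro i
    have h := congrFun hsym i
    simp only [hPi, hd, Matrix.mulVec, dotProduct, flipPerm, Matrix.of_apply] at h
    rwa [flip_sum i c] at h
  -- determinant facts
  have hdV : IsUnit V.det := by
    rw [hV, show vand c s = Matrix.vandermonde c from rfl]
    exact isUnit_iff_ne_zero.mpr (Matrix.det_vandermonde_ne_zero_iff.mpr hc)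
  have hdc : Function.Injective d := fun a b hab => hc (by
    simp only [hd] at hab; linarith)
  have hdVd : IsUnit Vd.det := by
    rw [hVd, show vand d s = Matrix.vandermonde d from rfl]
    exact isUnit_iff_ne_zero.mpr (Matrix.det_vandermonde_ne_zero_iff.mpr hdc)
  -- pascal = binM 1 1
  have hPbin : P = binM s 1 1 := by
    ext i j; simp [hP, pascal, binM]
  -- multiplication identities via binomial lemma
  have hVP : V * P = vand (fun i => 1 * c i + 1) s := by
    rw [hPbin, hV, vand_mul_binM]
  have hVdP : Vd * P = vand (fun i => 1 * d i + 1) s := by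
    rw [hPbin, hVd, vand_mul_binM]
  have hVE : V * E = Vd := by
    have e1 : (fun i : Fin s => (-1) * c i + ζ) = d := by
      funext i; simp only [hd]; ring
    rw [hE, hV, vand_mul_binM, e1, hVd]
  have hVdE : Vd * E = V := by
    have e1 : (fun i : Fin s => (-1) * d i + ζ) = c := by
      funext i; simp only [hd]; ring
    rw [hE, hVd, vand_mul_binM, e1, hV]
  have hVQ : V * Q = vand (fun i => 1 * c i + (-1)) s := by
    rw [hQ, hV, vand_mul_binM]
  -- E is an involution
  have hE2 : E * E = 1 := by
    apply cancel_left hdV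
    rw [← Matrix.mul_assoc, hVE, hVdE, Matrix.mul_one]
  -- P * Q = 1
  have hPQ : P * Q = 1 := by
    apply cancel_left hdV
    rw [← Matrix.mul_assoc, hVP, hQ, vand_mul_binM, Matrix.mul_one]
    have e1 : (fun i : Fin s => 1 * (1 * c i + 1) + (-1)) = c := by
      funext i; ring
    rw [e1, hV]
  -- E * P = Q * E
  have hEP : E * P = Q * E := by
    apply cancel_left hdV
    rw [← Matrix.mul_assoc, hVE, hVdP, ← Matrix.mul_assoc, hVQ, hE, vand_mul_binM]
    have e1 : (fun i : Fin s => 1 * d i + 1)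
        = (fun i : Fin s => (-1) * (1 * c i + (-1)) + ζ) := by
      funext i; simp only [hd]; ring
    rw [e1]
  -- flip facts
  have hPiV : Pi * V = Vd := by
    ext i j
    simp only [hPi, hV, hVd, flipPerm, vand, Matrix.mul_apply, Matrix.of_apply]
    rw [flip_sum i (fun k => c k ^ (j : ℕ))]
    rw [hrefl i]
  have hPiVd : Pi * Vd = V := by
    ext i j
    simp only [hPi, hV, hVd, flipPerm, vand, Matrix.mul_apply, Matrix.of_apply]
    rw [flip_sum i (fun k => d k ^ (j : ℕ))]
    simp only [hd]
    rw [hrefl i]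
    ring_nf
  -- inverses
  have hEinv : E⁻¹ = E := Matrix.inv_eq_right_inv hE2
  have hPinv : P⁻¹ = Q := Matrix.inv_eq_right_inv hPQ
  have hVdinv : Vd⁻¹ = E * V⁻¹ := by
    rw [← hVE, Matrix.mul_inv_rev, hEinv]
  have hVinvPi : V⁻¹ * Pi = Vd⁻¹ := by
    have h1 : V⁻¹ = Vd⁻¹ * Pi⁻¹ := by rw [← Matrix.mul_inv_rev, hPiVd]
    have hPi2 : Pi * Pi = 1 := by
      ext i j
      simp only [hPi, flipPerm, Matrix.mul_apply, Matrix.of_apply]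
      rw [flip_sum i (fun k => if (k : ℕ) + (j : ℕ) = s - 1 then (1 : ℝ) else 0)]
      have hi := i.isLt
      have hj := j.isLt
      by_cases hij : i = j
      · subst hij
        rw [if_pos (by simp; omega)]
        simp [Matrix.one_apply]
      · rw [if_neg, Matrix.one_apply_ne hij]
        intro h
        exact hij (Fin.ext (by simp at h; omega))
    have hPiinv : Pi⁻¹ = Pi := Matrix.inv_eq_right_inv hPi2
    rw [h1, hPiinv, Matrix.mul_assoc, hPi2, Matrix.mul_one]
  -- Θ⁻¹ = V Q V⁻¹
  have hThetainv : (V * P * V⁻¹)⁻¹ = V * Q * V⁻¹ := by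
    apply Matrix.inv_eq_right_inv
    calc V * P * V⁻¹ * (V * Q * V⁻¹)
        = V * P * (V⁻¹ * V) * Q * V⁻¹ := by
          simp only [Matrix.mul_assoc]
      _ = V * (P * Q) * V⁻¹ := by
          rw [Matrix.nonsing_inv_mul _ hdV]
          simp only [Matrix.mul_assoc, Matrix.one_mul]
      _ = 1 := by rw [hPQ, Matrix.mul_one, Matrix.mul_nonsing_inv _ hdV]
  rw [hThetainv]
  -- main computation: Π V P V⁻¹ Π = Vd P Vd⁻¹ = V E P E V⁻¹ = V Q E E V⁻¹ = V Q V⁻¹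
  calc Pi * (V * P * V⁻¹) * Pi
      = (Pi * V) * P * (V⁻¹ * Pi) := by simp only [Matrix.mul_assoc]
    _ = Vd * P * Vd⁻¹ := by rw [hPiV, hVinvPi]
    _ = V * (E * P) * (E * V⁻¹) := by
        rw [hVdinv, ← hVE]; simp only [Matrix.mul_assoc]
    _ = V * (Q * E) * (E * V⁻¹) := by rw [hEP]
    _ = V * Q * (E * E) * V⁻¹ := by simp only [Matrix.mul_assoc]
    _ = V * Q * V⁻¹ := by rw [hE2, Matrix.mul_one]
end
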